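/- Let 𝒱 be a left skew-closed category, 𝒜 a 𝒱-category, K an object of 𝒜, and T : 𝒜 → 𝒱 a 𝒱-functor. Then the assignment sending a 𝒱-natural transformation θ : 𝒜(K,-) ⇒ T to the morphism θ_K ∘ j_K : I → TK is a bijection from the set of 𝒱-natural transformations 𝒜(K,-) ⇒ T to the hom-set 𝒱(I,TK); its inverse sends ξ : I → TK to the family with components i_{TA} ∘ [ξ,1] ∘ T_{K,A} : 𝒜(K,A) → TA. -/

import Mathlib

open CategoryTheory

universe v u w

/-- A left skew-closed category structure on a category `V` (Street, "Skew-closed categories"). -/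
structure SkewClosedStruct (V : Type u) [Category.{v} V] where
  ihom : V → V → V
  imap : ∀ {A A' B B' : V}, (A' ⟶ A) → (B ⟶ B') → (ihom A B ⟶ ihom A' B')
  imap_id : ∀ (A B : V), imap (𝟙 A) (𝟙 B) = 𝟙 (ihom A B)
  imap_comp : ∀ {A A' A'' B B' B'' : V} (f : A' ⟶ A) (f' : A'' ⟶ A') (g : B ⟶ B') (g' : B' ⟶ B''),
      imap (f' ≫ f) (g ≫ g') = imap f g ≫ imap f' g'
  unit : V
  i : ∀ A : V, ihom unit A ⟶ A
  i_natural : ∀ {A B : V} (f : A ⟶ B), imap (𝟙 unit) f ≫ i B = i A ≫ f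
  j : ∀ A : V, unit ⟶ ihom A A
  j_natural : ∀ {A B : V} (f : A ⟶ B), j A ≫ imap (𝟙 A) f = j B ≫ imap f (𝟙 B)
  L : ∀ A B C : V, ihom B C ⟶ ihom (ihom A B) (ihom A C)
  L_natural : ∀ {B B' C C' : V} (A : V) (f : B' ⟶ B) (g : C ⟶ C'),
      imap f g ≫ L A B' C' = L A B C ≫ imap (imap (𝟙 A) f) (imap (𝟙 A) g)
  L_extranatural : ∀ {A A' : V} (h : A' ⟶ A) (B C : V),
      L A B C ≫ imap (𝟙 (ihom A B)) (imap h (𝟙 C))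
        = L A' B C ≫ imap (imap h (𝟙 B)) (𝟙 (ihom A' C))
  SCC1 : ∀ A B C D : V,
      L A C D ≫ L (ihom A B) (ihom A C) (ihom A D) ≫
          imap (L A B C) (𝟙 (ihom (ihom A B) (ihom A D)))
        = L B C D ≫ imap (𝟙 (ihom B C)) (L A B D)
  SCC2 : ∀ A C : V, L A A C ≫ imap (j A) (𝟙 (ihom A C)) ≫ i (ihom A C) = 𝟙 (ihom A C)
  SCC3 : ∀ A B : V, j B ≫ L A B B = j (ihom A B)
  SCC4 : ∀ B C : V, L unit B C ≫ imap (𝟙 (ihom unit B)) (i C) = imap (i B) (𝟙 C)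
  SCC5 : j unit ≫ i unit = 𝟙 unit

/-- A category enriched in the left skew-closed category `𝒱`. -/
structure VCat (V : Type u) [Category.{v} V] (𝒱 : SkewClosedStruct V) where
  Obj : Type w
  Hom : Obj → Obj → V
  id : ∀ A, 𝒱.unit ⟶ Hom A A
  comp : ∀ A B C, Hom B C ⟶ 𝒱.ihom (Hom A B) (Hom A C)
  EC1 : ∀ A B C D,
      comp A C D ≫ 𝒱.L (Hom A B) (Hom A C) (Hom A D) ≫
          𝒱.imap (comp A B C) (𝟙 (𝒱.ihom (Hom A B) (Hom A D)))
        = comp B C D ≫ 𝒱.imap (𝟙 (Hom B C)) (comp A B D)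
  EC2 : ∀ A C, comp A A C ≫ 𝒱.imap (id A) (𝟙 (Hom A C)) ≫ 𝒱.i (Hom A C) = 𝟙 (Hom A C)
  EC3 : ∀ A B, id B ≫ comp A B B = 𝒱.j (Hom A B)

/-- A `𝒱`-functor between `𝒱`-categories. -/
structure VFun {V : Type u} [Category.{v} V] {𝒱 : SkewClosedStruct V}
    (𝒜 : VCat.{v, u, w} V 𝒱) (𝒳 : VCat.{v, u, w} V 𝒱) where
  obj : 𝒜.Obj → 𝒳.Obj
  map : ∀ A B, 𝒜.Hom A B ⟶ 𝒳.Hom (obj A) (obj B)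
  EF1 : ∀ A B C,
      map A C ≫ 𝒳.comp (obj B) (obj A) (obj C) ≫
          𝒱.imap (map B A) (𝟙 (𝒳.Hom (obj B) (obj C)))
        = 𝒜.comp B A C ≫ 𝒱.imap (𝟙 (𝒜.Hom B A)) (map B C)
  EF2 : ∀ A, 𝒜.id A ≫ map A A = 𝒳.id (obj A)

/-- The ground skew-closed category `𝒱`, regarded as a `𝒱`-category. -/
@[reducible] def SkewClosedStruct.self {V : Type u} [Category.{v} V] (𝒱 : SkewClosedStruct V) :
    VCat.{v, u, u} V 𝒱 where
  Obj := V
  Hom := 𝒱.ihom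
  id := 𝒱.j
  comp := 𝒱.L
  EC1 := 𝒱.SCC1
  EC2 := 𝒱.SCC2
  EC3 := 𝒱.SCC3

/-- A `𝒱`-natural transformation between `𝒱`-functors with values in `𝒱` itself. -/
structure VNat {V : Type u} [Category.{v} V] {𝒱 : SkewClosedStruct V}
    {𝒜 : VCat.{v, u, u} V 𝒱} (S T : VFun 𝒜 𝒱.self) where
  app : ∀ A, S.obj A ⟶ T.obj A
  naturality : ∀ A B,
      T.map A B ≫ 𝒱.imap (app A) (𝟙 (T.obj B))
        = S.map A B ≫ 𝒱.imap (𝟙 (S.obj A)) (app B)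

/-- The representable `𝒱`-functor `𝒜(K,-) : 𝒜 ⟶ 𝒱`. -/
def VCat.repr {V : Type u} [Category.{v} V] {𝒱 : SkewClosedStruct V}
    (𝒜 : VCat.{v, u, u} V 𝒱) (K : 𝒜.Obj) : VFun 𝒜 𝒱.self where
  obj := fun A => 𝒜.Hom K A
  map := fun A B => 𝒜.comp K A B
  EF1 := fun A B C => 𝒜.EC1 K B A C
  EF2 := fun A => 𝒜.EC3 K A


section Aux
variable {V : Type u} [Category.{v} V] {𝒱 : SkewClosedStruct V}

theorem VNat.ext' {𝒜 : VCat.{v, u, u} V 𝒱} {S T : VFun 𝒜 𝒱.self}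
    {θ θ' : VNat S T} (h : θ.app = θ'.app) : θ = θ' := by
  cases θ; cases θ'; cases h; rfl

theorem imap_swap {A A' B B' : V} (f : A' ⟶ A) (g : B ⟶ B') :
    𝒱.imap f (𝟙 B) ≫ 𝒱.imap (𝟙 A') g = 𝒱.imap (𝟙 A) g ≫ 𝒱.imap f (𝟙 B') := by
  rw [← 𝒱.imap_comp, ← 𝒱.imap_comp]; simp

/-- The formula: every 𝒱-natural `θ : 𝒜(K,-) ⇒ T` is determined by `j_K ≫ θ_K`. -/
theorem ext_yoneda_formula {𝒜 : VCat.{v, u, u} V 𝒱} {K : 𝒜.Obj} {T : VFun 𝒜 𝒱.self}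
    (θ : VNat (𝒜.repr K) T) (A : 𝒜.Obj) :
    θ.app A = T.map K A ≫ 𝒱.imap (𝒜.id K ≫ θ.app K) (𝟙 (T.obj A)) ≫ 𝒱.i (T.obj A) := by
  have nat := θ.naturality K A
  simp only [VCat.repr] at nat
  rw [show 𝒱.imap (𝒜.id K ≫ θ.app K) (𝟙 (T.obj A))
      = 𝒱.imap (θ.app K) (𝟙 (T.obj A)) ≫ 𝒱.imap (𝒜.id K) (𝟙 (T.obj A)) from by
    erw [← 𝒱.imap_comp]; simp; rfl]
  simp only [Category.assoc]
  erw [reassoc_of% nat, ← reassoc_of% (imap_swap (𝒱 := 𝒱) (𝒜.id K) (θ.app A)),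
    𝒱.i_natural]
  simp only [VCat.repr]
  rw [reassoc_of% (𝒜.EC2 K A)]

/-- The inverse of the external Yoneda bijection. -/
def extYonedaInv {𝒜 : VCat.{v, u, u} V 𝒱} (K : 𝒜.Obj) (T : VFun 𝒜 𝒱.self)
    (ξ : 𝒱.unit ⟶ T.obj K) : VNat (𝒜.repr K) T where
  app A := T.map K A ≫ 𝒱.imap ξ (𝟙 (T.obj A)) ≫ 𝒱.i (T.obj A)
  naturality A B := by
    simp only [VCat.repr]
    have ef1 := T.EF1 A K B
    simp only [SkewClosedStruct.self] at ef1
    rw [show 𝒱.imap (T.map K A ≫ 𝒱.imap ξ (𝟙 (T.obj A)) ≫ 𝒱.i (T.obj A)) (𝟙 (T.obj B))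
        = 𝒱.imap (𝒱.imap ξ (𝟙 (T.obj A)) ≫ 𝒱.i (T.obj A)) (𝟙 (T.obj B))
            ≫ 𝒱.imap (T.map K A) (𝟙 (T.obj B)) from by rw [← 𝒱.imap_comp]; simp]
    rw [show 𝒱.imap (𝒱.imap ξ (𝟙 (T.obj A)) ≫ 𝒱.i (T.obj A)) (𝟙 (T.obj B))
        = 𝒱.imap (𝒱.i (T.obj A)) (𝟙 (T.obj B)) ≫ 𝒱.imap (𝒱.imap ξ (𝟙 (T.obj A))) (𝟙 (T.obj B))
        from by rw [← 𝒱.imap_comp]; simp]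
    rw [← 𝒱.SCC4 (T.obj A) (T.obj B)]
    simp only [Category.assoc]
    rw [← reassoc_of% (imap_swap (𝒱 := 𝒱) (𝒱.imap ξ (𝟙 (T.obj A))) (𝒱.i (T.obj B))),
      ← reassoc_of% (𝒱.L_extranatural ξ (T.obj A) (T.obj B)),
      ← imap_swap (𝒱 := 𝒱) (T.map K A) (𝒱.i (T.obj B)),
      ← reassoc_of% (imap_swap (𝒱 := 𝒱) (T.map K A) (𝒱.imap ξ (𝟙 (T.obj B)))),
      reassoc_of% ef1,
      show 𝒱.imap (𝟙 (𝒜.Hom K A)) (T.map K B ≫ 𝒱.imap ξ (𝟙 (T.obj B)) ≫ 𝒱.i (T.obj B))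
        = 𝒱.imap (𝟙 (𝒜.Hom K A)) (T.map K B)
            ≫ 𝒱.imap (𝟙 (𝒜.Hom K A)) (𝒱.imap ξ (𝟙 (T.obj B)))
            ≫ 𝒱.imap (𝟙 (𝒜.Hom K A)) (𝒱.i (T.obj B)) from by
        rw [← 𝒱.imap_comp, ← 𝒱.imap_comp]; simp]

theorem extYonedaInv_jK {𝒜 : VCat.{v, u, u} V 𝒱} (K : 𝒜.Obj) (T : VFun 𝒜 𝒱.self)
    (ξ : 𝒱.unit ⟶ T.obj K) : 𝒜.id K ≫ (extYonedaInv K T ξ).app K = ξ := by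
  simp only [extYonedaInv]
  erw [reassoc_of% (T.EF2 K)]
  show 𝒱.j (T.obj K) ≫ _ ≫ _ = ξ
  rw [← reassoc_of% (𝒱.j_natural ξ), 𝒱.i_natural, reassoc_of% 𝒱.SCC5]

end Aux

/-- **The external Yoneda lemma** (Street, "Skew-closed categories", Theorem in §4).
Let `𝒱` be a left skew-closed category, `𝒜` a `𝒱`-category, `K` an object of `𝒜`,
and `T : 𝒜 ⟶ 𝒱` a `𝒱`-functor.  The assignment sending a `𝒱`-natural transformation
`θ : 𝒜(K,-) ⇒ T` to `θ_K ∘ j_K : I ⟶ TK` is a bijection onto `𝒱(I, TK)`; its inverse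
sends `ξ : I ⟶ TK` to the family with components `i_{TA} ∘ [ξ,1] ∘ T_{K,A}`. -/
theorem external_yoneda {V : Type u} [Category.{v} V] (𝒱 : SkewClosedStruct V)
    (𝒜 : VCat.{v, u, u} V 𝒱) (K : 𝒜.Obj) (T : VFun 𝒜 𝒱.self) :
    Function.Bijective (fun θ : VNat (𝒜.repr K) T => 𝒜.id K ≫ θ.app K) ∧
    ∀ (θ : VNat (𝒜.repr K) T) (A : 𝒜.Obj),
      θ.app A = T.map K A ≫ 𝒱.imap (𝒜.id K ≫ θ.app K) (𝟙 (T.obj A)) ≫ 𝒱.i (T.obj A) := by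
  refine ⟨⟨fun θ θ' h => VNat.ext' (funext fun A => ?_), fun ξ => ⟨extYonedaInv K T ξ, extYonedaInv_jK K T ξ⟩⟩, ext_yoneda_formula⟩
  rw [ext_yoneda_formula θ A, ext_yoneda_formula θ' A]
  simp only at h
  rw [h]
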